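/- (Theorem 2: regret bound of the online linear control algorithm with disturbances.) Let A be a (κ,γ)-strongly stable continuous linear map on a finite-dimensional real inner product space E, B : F →L[ℝ] E a continuous linear map from a finite-dimensional real inner product space F, U ⊆ F, X = {x ∈ E : ∃ u ∈ U, x = A x + B u} nonempty, and Π : E → E a map satisfying Π y ∈ X and ‖Π y − x‖ ≤ ‖y − x‖ for all y ∈ E, x ∈ X. Let L > 0, D > 0, T ≥ 1, η = 2γ/(L·√(T·(1 + 4κ²))), (w_t)_{t≥1} a sequence in E, and (f_t)_{t=1}^T convex differentiable real-valued functions on E. Suppose the sequences (x_t), (x̄_t), (z_t) and inputs (u_t) in U satisfy: z_1 ∈ X, z_{t+1} = Π(z_t − η·∇f_t(x_t)), B u_t = (I − A) z_t, x_{t+1} = A x_t + B u_t + w_t, x̄_1 = x_1, x̄_{t+1} = A x̄_t + B u_t, and set x^d_t = x_t − x̄_t. Assume ‖x̄_t‖ ≤ D and ‖z_t‖ ≤ D for all t, and for every t and every ȳ ∈ E with ‖ȳ‖ ≤ D, ‖∇f_t(ȳ + x^d_t)‖ ≤ L·D. Fix u ∈ U with steady state x_u = A x_u + B u satisfying ‖x_u‖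 ≤ D, and let (x_t^u) satisfy x_1^u = x_1 and x_{t+1}^u = A x_t^u + B u + w_t, with the nominal trajectories x̄_t^u = x_t^u − x^d_t satisfying ‖x̄_t^u‖ ≤ D for all t. Then Σ_{t=1}^T f_t(x_t) − Σ_{t=1}^T f_t(x_t^u) ≤ (2·L·D²/γ)·(√(T·(1 + 4κ²)) + 2κ). -/

import Mathlib

open Finset

section AuxLemmas

lemma geom_aux {γ : ℝ} (hγ : 0 < γ) (hγ1 : γ ≤ 1) (n : ℕ) :
    ∑ i ∈ Finset.range n, (1 - γ) ^ i ≤ 1 / γ := by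
  have h := geom_sum_mul (1 - γ) n
  have hpow : (0:ℝ) ≤ (1 - γ) ^ n := pow_nonneg (by linarith) n
  rw [le_div_iff₀ hγ]
  nlinarith [h]

lemma convex_grad_ineq {E : Type*} [NormedAddCommGroup E] [InnerProductSpace ℝ E]
    [CompleteSpace E]
    (f : E → ℝ) (hf : ConvexOn ℝ Set.univ f) (hd : Differentiable ℝ f) (a b : E) :
    f a - f b ≤ inner ℝ (gradient f a) (a - b) := by
  have hline : ConvexOn ℝ Set.univ (f ∘ (AffineMap.lineMap a b : ℝ →ᵃ[ℝ] E)) := by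
    have := hf.comp_affineMap (AffineMap.lineMap a b : ℝ →ᵃ[ℝ] E)
    simpa using this
  have hgrad : HasGradientAt f (gradient f a) a := (hd a).hasGradientAt
  have hfd : HasFDerivAt f (InnerProductSpace.toDual ℝ E (gradient f a)) a :=
    (hasGradientAt_iff_hasFDerivAt).1 hgrad
  have hcurve : HasDerivAt (fun s : ℝ => (AffineMap.lineMap a b : ℝ →ᵃ[ℝ] E) s) (b - a) 0 := by
    simp only [AffineMap.coe_lineMap]
    have : HasDerivAt (fun s : ℝ => s • (b - a) + a) ((1:ℝ) • (b - a)) 0 :=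
      ((hasDerivAt_id 0).smul_const (b - a)).add_const a
    simpa [vsub_eq_sub] using this
  have h0 : (AffineMap.lineMap a b : ℝ →ᵃ[ℝ] E) 0 = a := by simp
  have hcomp : HasDerivAt (f ∘ (AffineMap.lineMap a b : ℝ →ᵃ[ℝ] E))
      (InnerProductSpace.toDual ℝ E (gradient f a) (b - a)) 0 := by
    refine HasFDerivAt.comp_hasDerivAt 0 ?_ hcurve
    rw [h0]; exact hfd
  have hslope := hline.le_slope_of_hasDerivAt (x := (0:ℝ)) (y := 1)
    (Set.mem_univ _) (Set.mem_univ _) one_pos hcomp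
  have h1 : (AffineMap.lineMap a b : ℝ →ᵃ[ℝ] E) 1 = b := by simp
  rw [slope_def_field] at hslope
  simp only [Function.comp_apply, h0, h1] at hslope
  have h2 : InnerProductSpace.toDual ℝ E (gradient f a) (b - a) ≤ f b - f a := by
    simpa using hslope
  rw [InnerProductSpace.toDual_apply_apply] at h2
  have hinner : (inner ℝ (gradient f a) (b - a) : ℝ) = - inner ℝ (gradient f a) (a - b) := by
    rw [← inner_neg_right]; congr 1; abel
  linarith [hinner ▸ h2]

end AuxLemmas

/-- A continuous linear map `A` is `(κ,γ)`-strongly stable if `A = H ∘ J ∘ H⁻¹` for some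
invertible continuous linear map `H` and continuous linear map `J` with `‖J‖ ≤ 1 - γ` and
`‖H‖·‖H⁻¹‖ ≤ κ`. -/
def StronglyStable {E : Type*} [NormedAddCommGroup E] [InnerProductSpace ℝ E]
    (κ γ : ℝ) (A : E →L[ℝ] E) : Prop :=
  ∃ (H : E ≃L[ℝ] E) (J : E →L[ℝ] E),
    A = (H : E →L[ℝ] E).comp (J.comp (H.symm : E →L[ℝ] E)) ∧
      ‖J‖ ≤ 1 - γ ∧ ‖(H : E →L[ℝ] E)‖ * ‖(H.symm : E →L[ℝ] E)‖ ≤ κ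

lemma stable_seq_bound {E : Type*} [NormedAddCommGroup E] [InnerProductSpace ℝ E]
    {κ γ : ℝ} (hγ : 0 < γ) (hγ1 : γ ≤ 1)
    {A : E →L[ℝ] E} (hA : StronglyStable κ γ A)
    (v c : ℕ → E) (M N : ℝ) (hM : 0 ≤ M) (hN : ‖v 1‖ ≤ N) (T : ℕ)
    (hrec : ∀ t, 1 ≤ t → t < T → v (t + 1) = A (v t) + c t)
    (hc : ∀ t, 1 ≤ t → t < T → ‖c t‖ ≤ M) :
    ∀ t, 1 ≤ t → t ≤ T → ‖v t‖ ≤ κ * ((1 - γ) ^ (t - 1) * N) + κ * (M / γ) := by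
  obtain ⟨H, J, hAeq, hJ, hHκ⟩ := hA
  set Hc : E →L[ℝ] E := (H : E →L[ℝ] E) with hHc
  set Hi : E →L[ℝ] E := (H.symm : E →L[ℝ] E) with hHi
  have hγ' : (0:ℝ) ≤ 1 - γ := by linarith
  have hHi0 : (0:ℝ) ≤ ‖Hi‖ := norm_nonneg _
  have hHc0 : (0:ℝ) ≤ ‖Hc‖ := norm_nonneg _
  have key : ∀ t, 1 ≤ t → t ≤ T →
      ‖Hi (v t)‖ ≤ (1 - γ) ^ (t - 1) * (‖Hi‖ * N) + ‖Hi‖ * (M / γ) := by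
    intro t ht
    induction t, ht using Nat.le_induction with
    | base =>
      intro _
      have h1 : ‖Hi (v 1)‖ ≤ ‖Hi‖ * ‖v 1‖ := Hi.le_opNorm _
      have h2 : ‖Hi‖ * ‖v 1‖ ≤ ‖Hi‖ * N := mul_le_mul_of_nonneg_left hN hHi0
      have h3 : 0 ≤ ‖Hi‖ * (M / γ) := by positivity
      simpa using by linarith
    | succ t ht IH =>
      intro htT
      have htT' : t < T := by omega
      have hv : v (t + 1) = A (v t) + c t := hrec t ht htT'
      have hApt : ∀ xx : E, Hi (A xx) = J (Hi xx) := by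
        intro xx
        rw [hAeq]
        simp [Hc, Hi, ContinuousLinearMap.comp_apply]
      have step : Hi (v (t + 1)) = J (Hi (v t)) + Hi (c t) := by
        rw [hv, map_add, hApt]
      have hb1 : ‖J (Hi (v t))‖ ≤ (1 - γ) * ‖Hi (v t)‖ := by
        calc ‖J (Hi (v t))‖ ≤ ‖J‖ * ‖Hi (v t)‖ := J.le_opNorm _
          _ ≤ (1 - γ) * ‖Hi (v t)‖ := mul_le_mul_of_nonneg_right hJ (norm_nonneg _)
      have hb2 : ‖Hi (c t)‖ ≤ ‖Hi‖ * M := by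
        calc ‖Hi (c t)‖ ≤ ‖Hi‖ * ‖c t‖ := Hi.le_opNorm _
          _ ≤ ‖Hi‖ * M := mul_le_mul_of_nonneg_left (hc t ht htT') hHi0
      have IH' := IH (by omega)
      have hmul : (1 - γ) * ‖Hi (v t)‖ ≤
          (1 - γ) * ((1 - γ) ^ (t - 1) * (‖Hi‖ * N) + ‖Hi‖ * (M / γ)) :=
        mul_le_mul_of_nonneg_left IH' hγ'
      have hpow : (1 - γ) * (1 - γ) ^ (t - 1) = (1 - γ) ^ (t + 1 - 1) := by
        have ht' : t + 1 - 1 = (t - 1) + 1 := by omega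
        rw [ht', pow_succ']
      have hfrac : (1 - γ) * (‖Hi‖ * (M / γ)) + ‖Hi‖ * M = ‖Hi‖ * (M / γ) := by
        field_simp
        ring
      calc ‖Hi (v (t + 1))‖ ≤ ‖J (Hi (v t))‖ + ‖Hi (c t)‖ := by
            rw [step]; exact norm_add_le _ _
        _ ≤ (1 - γ) * ‖Hi (v t)‖ + ‖Hi‖ * M := by linarith
        _ ≤ (1 - γ) * ((1 - γ) ^ (t - 1) * (‖Hi‖ * N) + ‖Hi‖ * (M / γ)) + ‖Hi‖ * M := by
            linarith
        _ = (1 - γ) ^ (t + 1 - 1) * (‖Hi‖ * N) + ‖Hi‖ * (M / γ) := by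
            rw [mul_add, ← mul_assoc, hpow]
            linarith [hfrac]
  intro t ht htT
  have h1 : v t = Hc (Hi (v t)) := by simp [Hc, Hi]
  have h2 : ‖v t‖ ≤ ‖Hc‖ * ‖Hi (v t)‖ := by
    conv_lhs => rw [h1]
    exact Hc.le_opNorm _
  have h3 := key t ht htT
  have hp : (0:ℝ) ≤ (1 - γ) ^ (t - 1) := pow_nonneg hγ' _
  have hN0 : 0 ≤ N := le_trans (norm_nonneg _) hN
  have hMγ : 0 ≤ M / γ := by positivity
  calc ‖v t‖ ≤ ‖Hc‖ * ‖Hi (v t)‖ := h2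
    _ ≤ ‖Hc‖ * ((1 - γ) ^ (t - 1) * (‖Hi‖ * N) + ‖Hi‖ * (M / γ)) :=
        mul_le_mul_of_nonneg_left h3 hHc0
    _ = (‖Hc‖ * ‖Hi‖) * ((1 - γ) ^ (t - 1) * N) + (‖Hc‖ * ‖Hi‖) * (M / γ) := by ring
    _ ≤ κ * ((1 - γ) ^ (t - 1) * N) + κ * (M / γ) := by
        have e1 := mul_le_mul_of_nonneg_right hHκ (mul_nonneg hp hN0)
        have e2 := mul_le_mul_of_nonneg_right hHκ hMγ
        linarith

set_option maxHeartbeats 2000000 in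
/-- Theorem 2: regret bound of the online linear control algorithm with
adversarial disturbances, against the benchmark of a fixed input `u ∈ U`. -/
theorem online_linear_control_regret_disturbed {E F : Type*}
    [NormedAddCommGroup E] [InnerProductSpace ℝ E] [FiniteDimensional ℝ E]
    [NormedAddCommGroup F] [InnerProductSpace ℝ F] [FiniteDimensional ℝ F]
    {κ γ L D η : ℝ} (hκ : 0 < κ) (hγ : 0 < γ) (hγ1 : γ ≤ 1) (hL : 0 < L) (hD : 0 < D)
    {A : E →L[ℝ] E} (hA : StronglyStable κ γ A) (B : F →L[ℝ] E) (U : Set F)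
    (hXne : {xx : E | ∃ uu ∈ U, xx = A xx + B uu}.Nonempty)
    (proj : E → E)
    (hprojX : ∀ y : E, proj y ∈ {xx : E | ∃ uu ∈ U, xx = A xx + B uu})
    (hproj : ∀ y : E, ∀ xx ∈ {xx : E | ∃ uu ∈ U, xx = A xx + B uu}, ‖proj y - xx‖ ≤ ‖y - xx‖)
    (T : ℕ) (hT : 1 ≤ T)
    (hη : η = 2 * γ / (L * Real.sqrt (T * (1 + 4 * κ ^ 2))))
    (w : ℕ → E) (f : ℕ → E → ℝ)
    (hconv : ∀ t ∈ Finset.Icc 1 T, ConvexOn ℝ Set.univ (f t))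
    (hdiff : ∀ t ∈ Finset.Icc 1 T, Differentiable ℝ (f t))
    (x xb z : ℕ → E) (useq : ℕ → F)
    (huseq : ∀ t : ℕ, 1 ≤ t → t ≤ T → useq t ∈ U)
    (hz1 : z 1 ∈ {xx : E | ∃ uu ∈ U, xx = A xx + B uu})
    (hzrec : ∀ t : ℕ, 1 ≤ t → t ≤ T → z (t + 1) = proj (z t - η • gradient (f t) (x t)))
    (hBu : ∀ t : ℕ, 1 ≤ t → t ≤ T → B (useq t) = ((1 : E →L[ℝ] E) - A) (z t))
    (hxrec : ∀ t : ℕ, 1 ≤ t → t ≤ T → x (t + 1) = A (x t) + B (useq t) + w t)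
    (hxb1 : xb 1 = x 1)
    (hxbrec : ∀ t : ℕ, 1 ≤ t → t ≤ T → xb (t + 1) = A (xb t) + B (useq t))
    (hxbbd : ∀ t ∈ Finset.Icc 1 T, ‖xb t‖ ≤ D)
    (hzbd : ∀ t ∈ Finset.Icc 1 T, ‖z t‖ ≤ D)
    (hgradbd : ∀ t ∈ Finset.Icc 1 T, ∀ yb : E, ‖yb‖ ≤ D →
      ‖gradient (f t) (yb + (x t - xb t))‖ ≤ L * D)
    (u : F) (hu : u ∈ U) (xu : E) (hxu : xu = A xu + B u) (hxubd : ‖xu‖ ≤ D)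
    (xtraj : ℕ → E) (hxtraj1 : xtraj 1 = x 1)
    (hxtraj : ∀ t : ℕ, 1 ≤ t → t ≤ T → xtraj (t + 1) = A (xtraj t) + B u + w t)
    (hxtrajbd : ∀ t ∈ Finset.Icc 1 T, ‖xtraj t - (x t - xb t)‖ ≤ D) :
    (∑ t ∈ Finset.Icc 1 T, f t (x t)) - ∑ t ∈ Finset.Icc 1 T, f t (xtraj t) ≤
      2 * L * D ^ 2 / γ * (Real.sqrt (T * (1 + 4 * κ ^ 2)) + 2 * κ) := by
  set S : ℝ := Real.sqrt (T * (1 + 4 * κ ^ 2)) with hSdef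
  have hT1 : (1:ℝ) ≤ (T:ℝ) := by exact_mod_cast hT
  have hargpos : (0:ℝ) < T * (1 + 4 * κ ^ 2) := by nlinarith
  have hS0 : 0 < S := Real.sqrt_pos.2 hargpos
  have hS2 : S ^ 2 = T * (1 + 4 * κ ^ 2) := Real.sq_sqrt hargpos.le
  have hη0 : 0 < η := by rw [hη]; positivity
  rcases subsingleton_or_nontrivial E with hE | hE
  · have hxy : ∀ t, x t = xtraj t := fun t => Subsingleton.elim _ _
    have hsum : ∑ t ∈ Finset.Icc 1 T, f t (x t) = ∑ t ∈ Finset.Icc 1 T, f t (xtraj t) :=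
      Finset.sum_congr rfl fun t _ => by rw [hxy]
    rw [hsum, sub_self]
    positivity
  -- nontrivial case
  have hκ1 : (1:ℝ) ≤ κ := by
    obtain ⟨H, J, hAeq, hJ, hHκ⟩ := hA
    have hid : (H : E →L[ℝ] E).comp (H.symm : E →L[ℝ] E) = ContinuousLinearMap.id ℝ E :=
      H.coe_comp_coe_symm
    have h1 : (1:ℝ) = ‖ContinuousLinearMap.id ℝ E‖ := (ContinuousLinearMap.norm_id).symm
    calc (1:ℝ) = ‖ContinuousLinearMap.id ℝ E‖ := h1
      _ = ‖(H : E →L[ℝ] E).comp (H.symm : E →L[ℝ] E)‖ := by rw [hid]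
      _ ≤ ‖(H : E →L[ℝ] E)‖ * ‖(H.symm : E →L[ℝ] E)‖ := ContinuousLinearMap.opNorm_comp_le _ _
      _ ≤ κ := hHκ
  have hLD0 : (0:ℝ) ≤ L * D := by positivity
  set g : ℕ → E := fun t => gradient (f t) (x t) with hg
  have hxuX : xu ∈ {xx : E | ∃ uu ∈ U, xx = A xx + B uu} := ⟨u, hu, hxu⟩
  have hgbd : ∀ t, 1 ≤ t → t ≤ T → ‖g t‖ ≤ L * D := by
    intro t ht1 ht2
    have h := hgradbd t (Finset.mem_Icc.2 ⟨ht1, ht2⟩) (xb t) (hxbbd t (Finset.mem_Icc.2 ⟨ht1, ht2⟩))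
    have he : xb t + (x t - xb t) = x t := by abel
    rwa [he] at h
  have hzX : ∀ t, 1 ≤ t → t ≤ T → z t ∈ {xx : E | ∃ uu ∈ U, xx = A xx + B uu} := by
    intro t ht
    induction t, ht using Nat.le_induction with
    | base => intro _; exact hz1
    | succ t ht IH =>
      intro htT
      rw [hzrec t ht (by omega)]
      exact hprojX _
  have hzstep : ∀ t, 1 ≤ t → t ≤ T → ‖z t - z (t + 1)‖ ≤ η * (L * D) := by
    intro t ht1 ht2
    rw [norm_sub_rev, hzrec t ht1 ht2]
    calc ‖proj (z t - η • g t) - z t‖ ≤ ‖(z t - η • g t) - z t‖ :=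
          hproj _ (z t) (hzX t ht1 ht2)
      _ = η * ‖g t‖ := by
          have : (z t - η • g t) - z t = -(η • g t) := by abel
          rw [this, norm_neg, norm_smul, Real.norm_eq_abs, abs_of_nonneg hη0.le]
      _ ≤ η * (L * D) := mul_le_mul_of_nonneg_left (hgbd t ht1 ht2) hη0.le
  -- bound on ‖xb t - z t‖
  have he : ∀ t, 1 ≤ t → t ≤ T → ‖xb t - z t‖ ≤
      κ * ((1 - γ) ^ (t - 1) * (2 * D)) + κ * (η * (L * D) / γ) := by
    have h1mem : (1:ℕ) ∈ Finset.Icc 1 T := Finset.mem_Icc.2 ⟨le_refl 1, hT⟩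
    refine stable_seq_bound hγ hγ1 hA (fun t => xb t - z t) (fun t => z t - z (t + 1))
      (η * (L * D)) (2 * D) (by positivity) ?_ T ?_ ?_
    · calc ‖xb 1 - z 1‖ ≤ ‖xb 1‖ + ‖z 1‖ := norm_sub_le _ _
        _ ≤ 2 * D := by linarith [hxbbd 1 h1mem, hzbd 1 h1mem]
    · intro t ht1 ht2
      show xb (t + 1) - z (t + 1) = A (xb t - z t) + (z t - z (t + 1))
      rw [hxbrec t ht1 (le_of_lt ht2), hBu t ht1 (le_of_lt ht2)]
      simp only [ContinuousLinearMap.sub_apply, ContinuousLinearMap.one_apply, map_sub]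
      abel
    · intro t ht1 ht2
      exact hzstep t ht1 (le_of_lt ht2)
  -- bound on ‖xtraj t - (x t - xb t) - xu‖
  have hyb : ∀ t, 1 ≤ t → t ≤ T → ‖xtraj t - (x t - xb t) - xu‖ ≤
      κ * ((1 - γ) ^ (t - 1) * (2 * D)) := by
    have h1mem : (1:ℕ) ∈ Finset.Icc 1 T := Finset.mem_Icc.2 ⟨le_refl 1, hT⟩
    have hBu2 : B u = xu - A xu := eq_sub_of_add_eq' hxu.symm
    have hN : ‖xtraj 1 - (x 1 - xb 1) - xu‖ ≤ 2 * D := by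
      calc ‖xtraj 1 - (x 1 - xb 1) - xu‖ ≤ ‖xtraj 1 - (x 1 - xb 1)‖ + ‖xu‖ := norm_sub_le _ _
        _ ≤ 2 * D := by linarith [hxtrajbd 1 h1mem]
    have hrec' : ∀ t, 1 ≤ t → t < T →
        xtraj (t + 1) - (x (t + 1) - xb (t + 1)) - xu
          = A (xtraj t - (x t - xb t) - xu) + 0 := by
      intro t ht1 ht2
      rw [hxtraj t ht1 (le_of_lt ht2), hxrec t ht1 (le_of_lt ht2),
        hxbrec t ht1 (le_of_lt ht2), hBu2]
      simp only [map_sub]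
      abel
    have key := stable_seq_bound hγ hγ1 hA (fun t => xtraj t - (x t - xb t) - xu)
      (fun _ => (0:E)) 0 (2 * D) (le_refl 0) hN T hrec' (fun t _ _ => by simp)
    intro t ht1 ht2
    have h := key t ht1 ht2
    simpa using h
  -- OGD inequality
  have hogd : ∀ t, 1 ≤ t → t ≤ T →
      2 * η * (inner ℝ (g t) (z t - xu) : ℝ) ≤
        ‖z t - xu‖ ^ 2 - ‖z (t + 1) - xu‖ ^ 2 + η ^ 2 * (L * D) ^ 2 := by
    intro t ht1 ht2
    have hp : ‖z (t + 1) - xu‖ ≤ ‖(z t - xu) - η • g t‖ := by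
      rw [hzrec t ht1 ht2]
      have harr : z t - η • g t - xu = (z t - xu) - η • g t := by abel
      calc ‖proj (z t - η • g t) - xu‖ ≤ ‖(z t - η • g t) - xu‖ := hproj _ xu hxuX
        _ = ‖(z t - xu) - η • g t‖ := by rw [harr]
    have hsq : ‖z (t + 1) - xu‖ ^ 2 ≤ ‖(z t - xu) - η • g t‖ ^ 2 :=
      pow_le_pow_left₀ (norm_nonneg _) hp 2
    have hexp : ‖(z t - xu) - η • g t‖ ^ 2 =
        ‖z t - xu‖ ^ 2 - 2 * (η * (inner ℝ (g t) (z t - xu) : ℝ)) + η ^ 2 * ‖g t‖ ^ 2 := by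
      rw [norm_sub_sq_real, real_inner_smul_right, norm_smul, Real.norm_eq_abs, mul_pow, sq_abs,
        real_inner_comm]
    have hg2 : ‖g t‖ ^ 2 ≤ (L * D) ^ 2 := pow_le_pow_left₀ (norm_nonneg _) (hgbd t ht1 ht2) 2
    nlinarith [sq_nonneg η]
  -- convexity inequality
  have hcvx : ∀ t ∈ Finset.Icc 1 T, f t (x t) - f t (xtraj t) ≤
      (inner ℝ (g t) (x t - xtraj t) : ℝ) := fun t ht =>
    convex_grad_ineq (f t) (hconv t ht) (hdiff t ht) (x t) (xtraj t)
  -- per-step bound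
  have hterm : ∀ t ∈ Finset.Icc 1 T, f t (x t) - f t (xtraj t) ≤
      (inner ℝ (g t) (z t - xu) : ℝ) + (4 * κ * L * D ^ 2) * (1 - γ) ^ (t - 1)
        + L * D * (κ * (η * (L * D) / γ)) := by
    intro t ht
    obtain ⟨ht1, ht2⟩ := Finset.mem_Icc.1 ht
    have hdec : (inner ℝ (g t) (x t - xtraj t) : ℝ) =
        inner ℝ (g t) (xb t - z t) + inner ℝ (g t) (z t - xu)
          + inner ℝ (g t) (-(xtraj t - (x t - xb t) - xu)) := by
      rw [← inner_add_right, ← inner_add_right]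
      congr 1
      abel
    have b1 : (inner ℝ (g t) (xb t - z t) : ℝ) ≤
        L * D * (κ * ((1 - γ) ^ (t - 1) * (2 * D)) + κ * (η * (L * D) / γ)) := by
      calc (inner ℝ (g t) (xb t - z t) : ℝ) ≤ ‖g t‖ * ‖xb t - z t‖ := real_inner_le_norm _ _
        _ ≤ L * D * (κ * ((1 - γ) ^ (t - 1) * (2 * D)) + κ * (η * (L * D) / γ)) :=
          mul_le_mul (hgbd t ht1 ht2) (he t ht1 ht2) (norm_nonneg _) hLD0
    have b3 : (inner ℝ (g t) (-(xtraj t - (x t - xb t) - xu)) : ℝ) ≤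
        L * D * (κ * ((1 - γ) ^ (t - 1) * (2 * D))) := by
      calc (inner ℝ (g t) (-(xtraj t - (x t - xb t) - xu)) : ℝ)
          ≤ ‖g t‖ * ‖-(xtraj t - (x t - xb t) - xu)‖ := real_inner_le_norm _ _
        _ = ‖g t‖ * ‖xtraj t - (x t - xb t) - xu‖ := by rw [norm_neg]
        _ ≤ L * D * (κ * ((1 - γ) ^ (t - 1) * (2 * D))) :=
          mul_le_mul (hgbd t ht1 ht2) (hyb t ht1 ht2) (norm_nonneg _) hLD0
    have hc := hcvx t ht
    rw [hdec] at hc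
    nlinarith [hc, b1, b3]
  -- sum of geometric terms
  have hgeomsum : ∑ t ∈ Finset.Icc 1 T, (1 - γ) ^ (t - 1) ≤ 1 / γ := by
    rw [← Finset.Ico_add_one_right_eq_Icc, Finset.sum_Ico_eq_sum_range]
    have hcongr : ∀ i ∈ Finset.range (T + 1 - 1), (1 - γ) ^ (1 + i - 1) = (1 - γ) ^ i := by
      intro i _
      congr 1
      omega
    rw [Finset.sum_congr rfl hcongr]
    exact geom_aux hγ hγ1 _
  -- telescoping sum for the OGD part
  have htel : ∑ t ∈ Finset.Icc 1 T, (‖z t - xu‖ ^ 2 - ‖z (t + 1) - xu‖ ^ 2) =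
      ‖z 1 - xu‖ ^ 2 - ‖z (T + 1) - xu‖ ^ 2 := by
    rw [← Finset.Ico_add_one_right_eq_Icc, Finset.sum_Ico_eq_sum_range]
    have hbeta : ∑ i ∈ Finset.range (T + 1 - 1), (‖z (1 + i) - xu‖ ^ 2 - ‖z (1 + i + 1) - xu‖ ^ 2)
        = ∑ i ∈ Finset.range (T + 1 - 1),
            ((fun j => ‖z (1 + j) - xu‖ ^ 2) i - (fun j => ‖z (1 + j) - xu‖ ^ 2) (i + 1)) := rfl
    rw [hbeta, Finset.sum_range_sub' (fun j => ‖z (1 + j) - xu‖ ^ 2)]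
    have h1 : 1 + (T + 1 - 1) = T + 1 := by omega
    simp only [Nat.add_zero, h1]
  have hogdsum : ∑ t ∈ Finset.Icc 1 T, (inner ℝ (g t) (z t - xu) : ℝ) ≤
      (4 * D ^ 2 + (T:ℝ) * (η ^ 2 * (L * D) ^ 2)) / (2 * η) := by
    have h1mem : (1:ℕ) ∈ Finset.Icc 1 T := Finset.mem_Icc.2 ⟨le_refl 1, hT⟩
    have hsum1 : ∑ t ∈ Finset.Icc 1 T, (2 * η * (inner ℝ (g t) (z t - xu) : ℝ)) ≤
        ∑ t ∈ Finset.Icc 1 T,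
          (‖z t - xu‖ ^ 2 - ‖z (t + 1) - xu‖ ^ 2 + η ^ 2 * (L * D) ^ 2) := by
      refine Finset.sum_le_sum fun t ht => ?_
      obtain ⟨ht1, ht2⟩ := Finset.mem_Icc.1 ht
      exact hogd t ht1 ht2
    rw [Finset.sum_add_distrib, htel, Finset.sum_const, Nat.card_Icc] at hsum1
    have hz1bd : ‖z 1 - xu‖ ^ 2 ≤ 4 * D ^ 2 := by
      have : ‖z 1 - xu‖ ≤ 2 * D := by
        calc ‖z 1 - xu‖ ≤ ‖z 1‖ + ‖xu‖ := norm_sub_le _ _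
          _ ≤ 2 * D := by linarith [hzbd 1 h1mem]
      nlinarith [norm_nonneg (z 1 - xu), this]
    have hcard : ((T + 1 - 1 : ℕ) : ℝ) = (T:ℝ) := by simp
    rw [nsmul_eq_mul, hcard] at hsum1
    have hmulsum : ∑ t ∈ Finset.Icc 1 T, (2 * η * (inner ℝ (g t) (z t - xu) : ℝ)) =
        2 * η * ∑ t ∈ Finset.Icc 1 T, (inner ℝ (g t) (z t - xu) : ℝ) := by
      rw [Finset.mul_sum]
    rw [hmulsum] at hsum1
    rw [le_div_iff₀ (by positivity : (0:ℝ) < 2 * η)]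
    nlinarith [sq_nonneg ‖z (T + 1) - xu‖, hsum1]
  -- assemble
  have hTcard : ((Finset.Icc 1 T).card : ℝ) = (T:ℝ) := by
    rw [Nat.card_Icc]
    simp
  have hmain : (∑ t ∈ Finset.Icc 1 T, f t (x t)) - ∑ t ∈ Finset.Icc 1 T, f t (xtraj t) ≤
      (4 * D ^ 2 + (T:ℝ) * (η ^ 2 * (L * D) ^ 2)) / (2 * η)
        + (4 * κ * L * D ^ 2) * (1 / γ) + (T:ℝ) * (L * D * (κ * (η * (L * D) / γ))) := by
    rw [← Finset.sum_sub_distrib]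
    calc ∑ t ∈ Finset.Icc 1 T, (f t (x t) - f t (xtraj t))
        ≤ ∑ t ∈ Finset.Icc 1 T, ((inner ℝ (g t) (z t - xu) : ℝ)
            + (4 * κ * L * D ^ 2) * (1 - γ) ^ (t - 1)
            + L * D * (κ * (η * (L * D) / γ))) := Finset.sum_le_sum hterm
      _ = (∑ t ∈ Finset.Icc 1 T, (inner ℝ (g t) (z t - xu) : ℝ))
            + (4 * κ * L * D ^ 2) * (∑ t ∈ Finset.Icc 1 T, (1 - γ) ^ (t - 1))
            + (T:ℝ) * (L * D * (κ * (η * (L * D) / γ))) := by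
          rw [Finset.sum_add_distrib, Finset.sum_add_distrib, ← Finset.mul_sum,
            Finset.sum_const, nsmul_eq_mul, hTcard]
      _ ≤ (4 * D ^ 2 + (T:ℝ) * (η ^ 2 * (L * D) ^ 2)) / (2 * η)
            + (4 * κ * L * D ^ 2) * (1 / γ) + (T:ℝ) * (L * D * (κ * (η * (L * D) / γ))) := by
          have h1 : (4 * κ * L * D ^ 2) * (∑ t ∈ Finset.Icc 1 T, (1 - γ) ^ (t - 1)) ≤
              (4 * κ * L * D ^ 2) * (1 / γ) :=
            mul_le_mul_of_nonneg_left hgeomsum (by positivity)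
          linarith [hogdsum]
  -- final numeric computation
  have hLne : L ≠ 0 := ne_of_gt hL
  have hSne : S ≠ 0 := ne_of_gt hS0
  have hγne : γ ≠ 0 := ne_of_gt hγ
  have hR1 : (4 * D ^ 2 + (T:ℝ) * (η ^ 2 * (L * D) ^ 2)) / (2 * η) =
      L * D ^ 2 * S / γ + (T:ℝ) * γ * L * D ^ 2 / S := by
    rw [hη]
    field_simp
    ring
  have hR3 : (T:ℝ) * (L * D * (κ * (η * (L * D) / γ))) = 2 * (T:ℝ) * κ * L * D ^ 2 / S := by
    rw [hη]
    field_simp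
  have hR2 : (4 * κ * L * D ^ 2) * (1 / γ) = 4 * κ * L * D ^ 2 / γ := by ring
  have hbase : γ * (γ + 2 * κ) ≤ 1 + 4 * κ ^ 2 := by nlinarith
  have key1 : (T:ℝ) * γ * L * D ^ 2 / S + 2 * (T:ℝ) * κ * L * D ^ 2 / S ≤
      L * D ^ 2 * S / γ := by
    rw [← add_div, div_le_div_iff₀ hS0 hγ]
    have hSS : S * S = (T:ℝ) * (1 + 4 * κ ^ 2) := by nlinarith [hS2]
    have hSS2 : L * D ^ 2 * (S * S) = L * D ^ 2 * ((T:ℝ) * (1 + 4 * κ ^ 2)) := by rw [hSS]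
    nlinarith [mul_le_mul_of_nonneg_left hbase
      (by positivity : (0:ℝ) ≤ L * D ^ 2 * (T:ℝ)), hSS2]
  have hrhseq : 2 * L * D ^ 2 / γ * (S + 2 * κ) =
      2 * L * D ^ 2 * S / γ + 4 * κ * L * D ^ 2 / γ := by
    field_simp
    ring
  rw [hrhseq]
  rw [hR1, hR3, hR2] at hmain
  have hfin : L * D ^ 2 * S / γ + ((T:ℝ) * γ * L * D ^ 2 / S + 2 * (T:ℝ) * κ * L * D ^ 2 / S) ≤
      2 * L * D ^ 2 * S / γ := by
    have : L * D ^ 2 * S / γ + L * D ^ 2 * S / γ = 2 * L * D ^ 2 * S / γ := by ring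
    linarith [key1]
  linarith [hmain, hfin]
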